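/- For every function $h : \omega \times \omega \to \{0,1,2\}$ there exist infinite disjoint sets $K, L \subseteq \omega$ and two colors $i, j \in \{0,1,2\}$ such that $h(m,n) \in \{i,j\}$ for all $m \in K$ and $n \in L$. -/
import Mathlib

open Set Filter

theorem ramsey_pairs (c : ℕ → ℕ → Fin 3) (S : Set ℕ) (hS : S.Infinite) :
    ∃ T ⊆ S, T.Infinite ∧ ∃ i : Fin 3, ∀ m ∈ T, ∀ n ∈ T, m < n → c m n = i := by
  have hne : (cofinite ⊓ 𝓟 S).NeBot := by
    rw [Filter.inf_principal_neBot_iff]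
    intro A hA
    obtain ⟨x, hx⟩ := (hS.diff hA).nonempty
    exact ⟨x, not_not.mp hx.2, hx.1⟩
  let U : Ultrafilter ℕ := Ultrafilter.of (cofinite ⊓ 𝓟 S)
  have hUcof : (U : Filter ℕ) ≤ cofinite := (Ultrafilter.of_le _).trans inf_le_left
  have hSU : S ∈ U := le_principal_iff.mp ((Ultrafilter.of_le _).trans inf_le_right)
  have hInf : ∀ A ∈ U, A.Infinite := by
    intro A hA
    by_contra hni
    have hfin : A.Finite := Set.not_infinite.mp hni
    exact (Ultrafilter.compl_mem_iff_notMem.mp (hUcof hfin.compl_mem_cofinite)) hA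
  -- the ultrafilter limit color of each row
  have hcs : ∀ m : ℕ, ∃ i : Fin 3, {n | c m n = i} ∈ U := by
    intro m
    by_contra hcon
    push_neg at hcon
    have hall : ∀ i : Fin 3, {n | c m n = i}ᶜ ∈ U := fun i =>
      Ultrafilter.compl_mem_iff_notMem.mpr (hcon i)
    have : (⋂ i : Fin 3, {n | c m n = i}ᶜ) ∈ U := Filter.iInter_mem.mpr hall
    have he : (⋂ i : Fin 3, {n | c m n = i}ᶜ) = ∅ := by
      ext n; simp
    rw [he] at this
    exact (Filter.empty_notMem (U : Filter ℕ)) this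
  choose cs hcs using hcs
  -- nested sequence of U-large sets
  let V : ℕ → Set ℕ := fun k => Nat.rec S
    (fun _ W => {n ∈ W | sInf W < n ∧ c (sInf W) n = cs (sInf W)}) k
  have hVsucc : ∀ k, V (k + 1) = {n ∈ V k | sInf (V k) < n ∧ c (sInf (V k)) n = cs (sInf (V k))} :=
    fun k => rfl
  have hVU : ∀ k, V k ∈ U := by
    intro k
    induction k with
    | zero => exact hSU
    | succ k ih =>
        rw [hVsucc]
        have h1 : {n | sInf (V k) < n} ∈ U := hUcof (by
          rw [Filter.mem_cofinite]
          exact (Set.finite_le_nat (sInf (V k))).subset (by intro x hx; simpa using hx))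
        have h2 : {n | c (sInf (V k)) n = cs (sInf (V k))} ∈ U := hcs _
        have := Filter.inter_mem (Filter.inter_mem ih h1) h2
        refine Filter.mem_of_superset this ?_
        intro x hx
        exact ⟨hx.1.1, hx.1.2, hx.2⟩
  set a : ℕ → ℕ := fun k => sInf (V k) with ha
  have haV : ∀ k, a k ∈ V k := fun k => Nat.sInf_mem (hInf _ (hVU k)).nonempty
  have hVmono : ∀ j k, j ≤ k → V k ⊆ V j := by
    intro j k hjk
    induction hjk with
    | refl => exact subset_rfl
    | step _ ih => exact fun x hx => ih ((hVsucc _ ▸ hx).1)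
  have hkey : ∀ j k, j < k → a j < a k ∧ c (a j) (a k) = cs (a j) := by
    intro j k hjk
    have : a k ∈ V (j + 1) := hVmono _ _ hjk (haV k)
    rw [hVsucc] at this
    exact ⟨this.2.1, this.2.2⟩
  have hamono : StrictMono a := strictMono_nat_of_lt_succ fun k => (hkey k (k+1) (lt_add_one k)).1
  -- pigeonhole on the colors cs ∘ a
  obtain ⟨i, hi⟩ := Finite.exists_infinite_fiber (fun k => cs (a k))
  have hiInf : ((fun k => cs (a k)) ⁻¹' {i}).Infinite := Set.infinite_coe_iff.mp hi
  refine ⟨a '' ((fun k => cs (a k)) ⁻¹' {i}), ?_, hiInf.image hamono.injective.injOn, i, ?_⟩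
  · rintro x ⟨k, _, rfl⟩
    exact hVmono 0 k (Nat.zero_le k) (haV k)
  · rintro m ⟨j, hj, rfl⟩ n ⟨k, hk, rfl⟩ hlt
    have hjk : j < k := hamono.lt_iff_lt.mp hlt
    rw [(hkey j k hjk).2]
    exact hj

/-- for every 3-coloring `h` of `ω × ω` there are infinite disjoint
`K, L ⊆ ω` and colors `i, j` with `h(m,n) ∈ {i,j}` for all `m ∈ K`, `n ∈ L`. -/
theorem stmt18 (h : ℕ × ℕ → Fin 3) :
    ∃ K L : Set ℕ, K.Infinite ∧ L.Infinite ∧ Disjoint K L ∧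
      ∃ i j : Fin 3, ∀ m ∈ K, ∀ n ∈ L, h (m, n) = i ∨ h (m, n) = j := by
  obtain ⟨T1, _, hT1inf, i, hT1⟩ :=
    ramsey_pairs (fun m n => h (m, n)) Set.univ Set.infinite_univ
  obtain ⟨T2, hT2sub, hT2inf, j, hT2⟩ :=
    ramsey_pairs (fun m n => h (n, m)) T1 hT1inf
  -- increasing enumeration of T2
  let b : ℕ → ℕ := fun k => Nat.rec (sInf T2) (fun _ p => sInf {n ∈ T2 | p < n}) k
  have hb0 : b 0 ∈ T2 := Nat.sInf_mem hT2inf.nonempty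
  have hbsucc : ∀ k, b (k + 1) ∈ T2 ∧ b k < b (k + 1) := by
    intro k
    have hne : {n ∈ T2 | b k < n}.Nonempty := by
      obtain ⟨n, hn, hgt⟩ := hT2inf.exists_gt (b k)
      exact ⟨n, hn, hgt⟩
    have hmem : b (k + 1) ∈ {n ∈ T2 | b k < n} := Nat.sInf_mem hne
    exact ⟨hmem.1, hmem.2⟩
  have hbT2 : ∀ k, b k ∈ T2 := by
    intro k
    cases k with
    | zero => exact hb0
    | succ k => exact (hbsucc k).1
  have hbmono : StrictMono b := strictMono_nat_of_lt_succ fun k => (hbsucc k).2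
  have hev : {k : ℕ | Even k}.Infinite := by
    have hsub : Set.range (fun n : ℕ => 2 * n) ⊆ {k | Even k} := by
      rintro _ ⟨x, rfl⟩; exact ⟨x, by ring⟩
    exact (Set.infinite_range_of_injective (fun x y hxy => by omega)).mono hsub
  have hod : {k : ℕ | Odd k}.Infinite := by
    have hsub : Set.range (fun n : ℕ => 2 * n + 1) ⊆ {k | Odd k} := by
      rintro _ ⟨x, rfl⟩; exact ⟨x, rfl⟩
    exact (Set.infinite_range_of_injective (fun x y hxy => by omega)).mono hsub
  refine ⟨b '' {k | Even k}, b '' {k | Odd k}, ?_, ?_, ?_, i, j, ?_⟩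
  · exact hev.image (hbmono.injective.injOn)
  · exact hod.image (hbmono.injective.injOn)
  · rw [Set.disjoint_left]
    rintro x ⟨s, hs, rfl⟩ ⟨t, ht, hbt⟩
    have : s = t := hbmono.injective hbt.symm
    subst this
    exact (Nat.not_odd_iff_even.mpr hs) ht
  · rintro m ⟨s, hs, rfl⟩ n ⟨t, ht, rfl⟩
    have hst : s ≠ t := fun e => (Nat.not_odd_iff_even.mpr hs) (e ▸ ht)
    rcases hst.lt_or_gt with hlt | hlt
    · exact Or.inl (hT1 (b s) (hT2sub (hbT2 s)) (b t) (hT2sub (hbT2 t)) (hbmono hlt))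
    · exact Or.inr (hT2 (b t) (hbT2 t) (b s) (hbT2 s) (hbmono hlt))
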